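/- Observed-data decomposition with multiple treatment alternatives: Let H : Ω → ℝ^d be the true history, 𝒜 ⊆ ℝ a finite set containing 0, A : Ω → 𝒜 the true treatment, A* : Ω → 𝒜 the prescribed treatment, and H* : Ω → ℝ^m the observed history with σ(H*) ⊆ σ(H, A*). Let Y be integrable with E[Y | σ(H, A)] = ν(H) + Σ_{a ∈ 𝒜, a ≠ 0} 𝟙{A = a}·C_a(H) μ-a.e., where ν(H) is integrable and each C_a is a bounded Borel function. Assume Condition 1: E[Y | σ(H, A, A*)] = E[Y | σ(H, A)] μ-a.e., and, for each a ∈ 𝒜 with a ≠ 0, the Condition-3 analogue E[𝟙{A = a}·C_a(H) | σ(H*, A*)] = E[𝟙{A = a} | σ(H*, A*)]·E[C_a(H) | σ(H*, A*)] μ-a.e. Then E[Y | σ(H*, A*)] = E[ν(H) | σ(H*, A*)] + Σ_{a ∈ 𝒜, a ≠ 0} E[𝟙{A = a} | σ(H*, A*)]·E[C_a(H) | σ(H*, A*)] μ-a.e. -/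

import Mathlib

open MeasureTheory


private theorem aux_observed_decomp {Ω : Type*} {m0 : MeasurableSpace Ω}
    (μ : Measure Ω) [IsProbabilityMeasure μ]
    {mG mF1 mF2 : MeasurableSpace Ω} (hG2 : mG ≤ mF2) (h20 : mF2 ≤ m0)
    {Y f : Ω → ℝ} (s : Finset ℝ) (g p q : ℝ → Ω → ℝ)
    (hf : Integrable f μ) (hg : ∀ a ∈ s, Integrable (g a) μ)
    (hblip : μ[Y|mF1] =ᵐ[μ] fun ω => f ω + ∑ a ∈ s, g a ω)
    (hcond1 : μ[Y|mF2] =ᵐ[μ] μ[Y|mF1])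
    (hcond3 : ∀ a ∈ s, μ[g a|mG] =ᵐ[μ] fun ω => p a ω * q a ω) :
    μ[Y|mG] =ᵐ[μ] fun ω => (μ[f|mG]) ω + ∑ a ∈ s, p a ω * q a ω := by
  have hsum_int : Integrable (fun ω => ∑ a ∈ s, g a ω) μ := integrable_finset_sum _ hg
  have hfun : (fun ω => ∑ a ∈ s, g a ω) = ∑ a ∈ s, g a := by
    ext ω; rw [Finset.sum_apply]
  have hsum_ce : μ[fun ω => ∑ a ∈ s, g a ω|mG] =ᵐ[μ] ∑ a ∈ s, μ[g a|mG] := by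
    rw [hfun]; exact condExp_finset_sum hg mG
  have h3 : ∀ᵐ ω ∂μ, ∀ a ∈ (s : Set ℝ), (μ[g a|mG]) ω = p a ω * q a ω :=
    (ae_ball_iff s.countable_toSet).mpr (fun a ha => hcond3 a (Finset.mem_coe.mp ha))
  calc μ[Y|mG] =ᵐ[μ] μ[μ[Y|mF2]|mG] := (condExp_condExp_of_le hG2 h20).symm
    _ =ᵐ[μ] μ[μ[Y|mF1]|mG] := condExp_congr_ae hcond1
    _ =ᵐ[μ] μ[fun ω => f ω + ∑ a ∈ s, g a ω|mG] := condExp_congr_ae hblip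
    _ =ᵐ[μ] fun ω => (μ[f|mG]) ω + (μ[fun ω' => ∑ a ∈ s, g a ω'|mG]) ω :=
        condExp_add hf hsum_int mG
    _ =ᵐ[μ] fun ω => (μ[f|mG]) ω + ∑ a ∈ s, p a ω * q a ω := by
        filter_upwards [hsum_ce, h3] with ω hω1 hω2
        rw [hω1, Finset.sum_apply]
        exact congrArg _ (Finset.sum_congr rfl fun a ha => hω2 a (Finset.mem_coe.mpr ha))

/-- Observed-data decomposition with multiple treatment alternatives: under
Condition 1 and the per-treatment Condition-3 analogue,
`E[Y | σ(H*, A*)] = E[ν(H) | σ(H*, A*)] + Σ_{a ≠ 0} E[𝟙{A = a} | σ(H*, A*)]·E[C_a(H) | σ(H*, A*)]`. -/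
theorem observed_data_decomposition_multiple_treatments
    {Ω : Type*} [MeasurableSpace Ω] (μ : Measure Ω) [IsProbabilityMeasure μ]
    {d m : ℕ} (H : Ω → (Fin d → ℝ)) (hH : Measurable H)
    (𝒜 : Finset ℝ) (h0𝒜 : (0 : ℝ) ∈ 𝒜)
    (A Astar : Ω → ℝ) (hA : Measurable A) (hAstar : Measurable Astar)
    (hArange : ∀ ω, A ω ∈ 𝒜) (hAstarrange : ∀ ω, Astar ω ∈ 𝒜)
    (Hstar : Ω → (Fin m → ℝ)) (hHstar : Measurable Hstar)
    (hHstar_sub : MeasurableSpace.comap Hstar inferInstance ≤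
      MeasurableSpace.comap (fun ω => (H ω, Astar ω)) inferInstance)
    (Y : Ω → ℝ) (hY : Integrable Y μ)
    (ν : (Fin d → ℝ) → ℝ) (hν : Measurable ν) (hνint : Integrable (fun ω => ν (H ω)) μ)
    (C : ℝ → (Fin d → ℝ) → ℝ) (hC : ∀ a ∈ 𝒜, Measurable (C a))
    (hCbdd : ∀ a ∈ 𝒜, ∃ M, ∀ x, |C a x| ≤ M)
    (hblip : μ[Y | MeasurableSpace.comap (fun ω => (H ω, A ω)) inferInstance]
      =ᵐ[μ] fun ω => ν (H ω)
        + ∑ a ∈ 𝒜.erase 0, (if A ω = a then (1 : ℝ) else 0) * C a (H ω))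
    (hcond1 : μ[Y | MeasurableSpace.comap (fun ω => (H ω, A ω, Astar ω)) inferInstance]
      =ᵐ[μ] μ[Y | MeasurableSpace.comap (fun ω => (H ω, A ω)) inferInstance])
    (hcond3 : ∀ a ∈ 𝒜.erase 0,
      μ[fun ω => (if A ω = a then (1 : ℝ) else 0) * C a (H ω) |
          MeasurableSpace.comap (fun ω => (Hstar ω, Astar ω)) inferInstance]
        =ᵐ[μ] fun ω =>
          (μ[fun ω' => (if A ω' = a then (1 : ℝ) else 0) |
              MeasurableSpace.comap (fun ω' => (Hstar ω', Astar ω')) inferInstance]) ω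
          * (μ[fun ω' => C a (H ω') |
              MeasurableSpace.comap (fun ω' => (Hstar ω', Astar ω')) inferInstance]) ω) :
    μ[Y | MeasurableSpace.comap (fun ω => (Hstar ω, Astar ω)) inferInstance]
      =ᵐ[μ] fun ω =>
        (μ[fun ω' => ν (H ω') |
            MeasurableSpace.comap (fun ω' => (Hstar ω', Astar ω')) inferInstance]) ω
        + ∑ a ∈ 𝒜.erase 0,
          (μ[fun ω' => (if A ω' = a then (1 : ℝ) else 0) |
              MeasurableSpace.comap (fun ω' => (Hstar ω', Astar ω')) inferInstance]) ω
          * (μ[fun ω' => C a (H ω') |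
              MeasurableSpace.comap (fun ω' => (Hstar ω', Astar ω')) inferInstance]) ω := by

  classical
  have hm2 : MeasurableSpace.comap (fun ω => (H ω, A ω, Astar ω)) inferInstance
      ≤ (inferInstance : MeasurableSpace Ω) :=
    (hH.prodMk (hA.prodMk hAstar)).comap_le
  have hmeasF2 : Measurable[MeasurableSpace.comap (fun ω => (H ω, A ω, Astar ω)) inferInstance]
      (fun ω => (H ω, A ω, Astar ω)) := measurable_iff_comap_le.mpr le_rfl
  have hHstarF2 : Measurable[MeasurableSpace.comap (fun ω => (H ω, A ω, Astar ω)) inferInstance]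
      Hstar := by
    rw [measurable_iff_comap_le]
    refine le_trans hHstar_sub ?_
    rw [← measurable_iff_comap_le]
    exact (measurable_fst.prodMk measurable_snd.snd).comp hmeasF2
  have hAstarF2 : Measurable[MeasurableSpace.comap (fun ω => (H ω, A ω, Astar ω)) inferInstance]
      Astar := measurable_snd.snd.comp hmeasF2
  have hle : MeasurableSpace.comap (fun ω => (Hstar ω, Astar ω)) inferInstance
      ≤ MeasurableSpace.comap (fun ω => (H ω, A ω, Astar ω)) inferInstance :=
    (hHstarF2.prodMk hAstarF2).comap_le
  have hterm_int : ∀ a ∈ 𝒜.erase 0,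
      Integrable (fun ω => (if A ω = a then (1 : ℝ) else 0) * C a (H ω)) μ := by
    intro a ha
    have ha' := Finset.mem_of_mem_erase ha
    obtain ⟨M, hM⟩ := hCbdd a ha'
    have hmeas : Measurable fun ω => (if A ω = a then (1 : ℝ) else 0) * C a (H ω) := by
      refine Measurable.mul ?_ ((hC a ha').comp hH)
      exact Measurable.ite (p := fun ω => A ω = a)
        (hA (measurableSet_singleton a)) measurable_const measurable_const
    refine ⟨hmeas.aestronglyMeasurable, HasFiniteIntegral.of_bounded (C := M) ?_⟩
    refine ae_of_all μ fun ω => ?_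
    rw [Real.norm_eq_abs, abs_mul]
    calc |if A ω = a then (1 : ℝ) else 0| * |C a (H ω)|
        ≤ 1 * |C a (H ω)| := by
          apply mul_le_mul_of_nonneg_right _ (abs_nonneg _)
          split <;> simp
      _ = |C a (H ω)| := one_mul _
      _ ≤ M := hM _
  exact aux_observed_decomp μ hle hm2 (𝒜.erase 0)
    (fun a ω => (if A ω = a then (1 : ℝ) else 0) * C a (H ω))
    (fun a ω => (μ[fun ω' => (if A ω' = a then (1 : ℝ) else 0) |
      MeasurableSpace.comap (fun ω' => (Hstar ω', Astar ω')) inferInstance]) ω)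
    (fun a ω => (μ[fun ω' => C a (H ω') |
      MeasurableSpace.comap (fun ω' => (Hstar ω', Astar ω')) inferInstance]) ω)
    hνint hterm_int hblip hcond1 hcond3
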